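/- arXiv:2105.03195 — 3 statements merged into one kernel-verified Lean document; each statement's English description precedes it below -/
import Mathlib

section
/- Fix degree statistics n = (n(c), c ≥ 0) with Σ_{c≥0} n(c) = n and Σ_{c≥0} c·n(c) = n − 1. Let d = (d_0,...,d_{k−1}) be a sequence of non-negative integers with w(d,c) = |{0 ≤ i ≤ k−1 : d_i = c}| ≤ n(c) for all c ≥ 0. If (T,V) is a uniformly random element of 𝒯_n^•, then P((deg_T(V^0),...,deg_T(V^{k−1})) = d and |V| ≥ k) = (1/(n)_k) · ∏_{i=0}^{k−1} d_i · ∏_{c≥0} (n(c))_{w(d,c)}, where (m)_b = m(m−1)···(m−b+1) denotes the falling factorial. -/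
open scoped ENNReal NNReal BigOperators
open MeasureTheory ProbabilityTheory

/-- A plane tree: a finite rooted tree with ordered children. -/
inductive PlaneTree : Type where
  | node : List PlaneTree → PlaneTree

namespace PlaneTree

/-- The list of root subtrees of a plane tree. -/
def children : PlaneTree → List PlaneTree
  | node l => l

/-- The number of vertices of a plane tree. -/
def size : PlaneTree → ℕ
  | node l => 1 + (l.attach.map fun c => size c.1).sum
decreasing_by
  simp only [node.sizeOf_spec]
  have := List.sizeOf_lt_of_mem c.2
  omega

/-- The height of a plane tree: the maximal graph distance from the root to a vertex. -/
def height : PlaneTree → ℕ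
  | node l => (l.attach.map fun c => height c.1 + 1).foldr max 0
decreasing_by
  simp only [node.sizeOf_spec]
  have := List.sizeOf_lt_of_mem c.2
  omega

/-- The number of vertices of a plane tree at distance `k` from the root. -/
def levelCount : PlaneTree → ℕ → ℕ
  | _, 0 => 1
  | node l, k + 1 => (l.attach.map fun c => levelCount c.1 k).sum
termination_by t _ => sizeOf t
decreasing_by
  simp only [node.sizeOf_spec]
  have := List.sizeOf_lt_of_mem c.2
  omega

/-- The width of a plane tree: the maximal number of vertices on a single level. -/
def width (t : PlaneTree) : ℕ :=
  (Finset.range (t.height + 1)).sup t.levelCount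

/-- The number of vertices of a plane tree having exactly `c` children. -/
def degCount : PlaneTree → ℕ → ℕ
  | node l, c => (if l.length = c then 1 else 0) + (l.attach.map fun s => degCount s.1 c).sum
termination_by t _ => sizeOf t
decreasing_by
  simp only [node.sizeOf_spec]
  have := List.sizeOf_lt_of_mem s.2
  omega

/-- The sum over all vertices `v` of `(deg v)^2`, i.e. `|n_t|_2^2`. -/
def sumDegSq : PlaneTree → ℕ
  | node l => l.length ^ 2 + (l.attach.map fun c => sumDegSq c.1).sum
decreasing_by
  simp only [node.sizeOf_spec]
  have := List.sizeOf_lt_of_mem c.2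
  omega

/-- The subtree of a plane tree rooted at the vertex reached by following the path `p`
(at each step, `i` means "move to the `i`-th child"), if that vertex exists. -/
def subtreeAt : List ℕ → PlaneTree → Option PlaneTree
  | [], t => some t
  | i :: p, node l => (l[i]?).bind (subtreeAt p)

/-- `v : List ℕ` encodes a vertex of the plane tree `t` (the root is `[]`, and the height of
a vertex is the length of its path). -/
def IsVertex (t : PlaneTree) (v : List ℕ) : Prop :=
  subtreeAt v t ≠ none

/-- The number of children of the vertex `v` of `t` (junk value `0` if `v` is not a vertex). -/
def degAt (t : PlaneTree) (v : List ℕ) : ℕ :=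
  match subtreeAt v t with
  | some s => s.children.length
  | none => 0

end PlaneTree

/-- `n` is the degree statistics sequence of some plane tree: `Σ_c n(c) = 1 + Σ_c c·n(c)`. -/
def IsDegStats (n : ℕ →₀ ℕ) : Prop :=
  n.sum (fun _ m => m) = 1 + n.sum (fun c m => c * m)

/-- `|n|_1 = Σ_c c·n(c)`. -/
def dsNorm1 (n : ℕ →₀ ℕ) : ℕ := n.sum fun c m => c * m

/-- `|n|_2² = Σ_c c²·n(c)`. -/
def dsNorm2Sq (n : ℕ →₀ ℕ) : ℕ := n.sum fun c m => c ^ 2 * m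

/-- The set `𝒯_n^•` of marked plane trees `(t,v)` with degree statistics `n`. -/
def markedTrees (n : ℕ →₀ ℕ) : Set (PlaneTree × List ℕ) :=
  {tv | (∀ c, tv.1.degCount c = n c) ∧ tv.1.IsVertex tv.2}




/-! ### Auxiliary development -/

namespace SpinalAux

open PlaneTree

/-- Total degree count of a forest. -/
def fdc (l : List PlaneTree) (c : ℕ) : ℕ := (l.map (PlaneTree.degCount · c)).sum

lemma degCount_node (l : List PlaneTree) (c : ℕ) :
    degCount (node l) c = (if l.length = c then 1 else 0) + fdc l c := by
  rw [PlaneTree.degCount]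
  exact congrArg _ (congrArg List.sum (List.attach_map_val (l := l) (f := (degCount · c))))

lemma fdc_nil (c : ℕ) : fdc [] c = 0 := rfl

lemma fdc_cons (t : PlaneTree) (l : List PlaneTree) (c : ℕ) :
    fdc (t :: l) c = degCount t c + fdc l c := rfl

lemma fdc_append (l₁ l₂ : List PlaneTree) (c : ℕ) :
    fdc (l₁ ++ l₂) c = fdc l₁ c + fdc l₂ c := by
  simp [fdc]

lemma subtreeAt_nil (t : PlaneTree) : subtreeAt [] t = some t := rfl

lemma subtreeAt_cons (j : ℕ) (v : List ℕ) (l : List PlaneTree) :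
    subtreeAt (j :: v) (node l) = (l[j]?).bind (subtreeAt v) := rfl

lemma isVertex_nil (t : PlaneTree) : t.IsVertex [] := by
  simp [IsVertex, subtreeAt_nil]

lemma isVertex_cons_iff {l : List PlaneTree} {j : ℕ} {v : List ℕ} {tj : PlaneTree}
    (hj : l[j]? = some tj) : (node l).IsVertex (j :: v) ↔ tj.IsVertex v := by
  rw [IsVertex, subtreeAt_cons, hj]
  rfl

lemma isVertex_cons_elim {l : List PlaneTree} {j : ℕ} {v : List ℕ}
    (h : (node l).IsVertex (j :: v)) : ∃ tj, l[j]? = some tj ∧ tj.IsVertex v := by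
  rw [IsVertex, subtreeAt_cons] at h
  cases hj : l[j]? with
  | none => rw [hj] at h; simp at h
  | some tj => exact ⟨tj, rfl, by rw [hj] at h; exact h⟩

lemma degAt_nil (l : List PlaneTree) : degAt (node l) ([] : List ℕ) = l.length := rfl

lemma degAt_cons {l : List PlaneTree} {j : ℕ} {tj : PlaneTree} (hj : l[j]? = some tj)
    (v : List ℕ) : degAt (node l) (j :: v) = degAt tj v := by
  rw [degAt, subtreeAt_cons, hj]
  rfl

lemma degCount_self_pos (g : List PlaneTree) : 1 ≤ degCount (node g) g.length := by
  rw [degCount_node]; simp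


def forestSet (r : ℕ) (m : ℕ →₀ ℕ) : Set (List PlaneTree) :=
  {l | l.length = r ∧ ∀ c, fdc l c = m c}

def spineSet (k : ℕ) (d : ℕ → ℕ) (r : ℕ) (m : ℕ →₀ ℕ) (s : ℕ) :
    Set (List PlaneTree × List ℕ) :=
  {lv | lv.1.length = r ∧ (∀ c, fdc lv.1 c = m c) ∧
    ∃ t, lv.1[s]? = some t ∧ t.IsVertex lv.2 ∧ k ≤ lv.2.length ∧
      ∀ i < k, t.degAt (lv.2.take i) = d i}

def headCons (c : ℕ) (l : List PlaneTree) : List PlaneTree := node (l.take c) :: l.drop c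

def wfn (k : ℕ) (d : ℕ → ℕ) (c : ℕ) : ℕ := ((Finset.range k).filter fun i => d i = c).card

lemma headCons_injective (c : ℕ) : Function.Injective (headCons c) := by
  intro a b h
  simp only [headCons, List.cons.injEq, node.injEq] at h
  rw [← List.take_append_drop c a, ← List.take_append_drop c b, h.1, h.2]

lemma sub_add_single {m : ℕ →₀ ℕ} {c : ℕ} (hc : m c ≠ 0) :
    (m - Finsupp.single c 1) + Finsupp.single c 1 = m :=
  tsub_add_cancel_of_le (Finsupp.single_le_iff.2 (Nat.one_le_iff_ne_zero.2 hc))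

lemma add_single_apply (m' : ℕ →₀ ℕ) (c c' : ℕ) :
    (m' + Finsupp.single c 1 : ℕ →₀ ℕ) c' = m' c' + if c = c' then 1 else 0 := by
  simp [Finsupp.single_apply]

lemma support_add_single (m' : ℕ →₀ ℕ) (c : ℕ) :
    (m' + Finsupp.single c 1).support = insert c m'.support := by
  ext a
  simp only [Finsupp.mem_support_iff, add_single_apply, Finset.mem_insert]
  by_cases h : c = a <;> simp [h, eq_comm]

lemma sumM_add_single (m' : ℕ →₀ ℕ) (c : ℕ) :
    (m' + Finsupp.single c 1).sum (fun _ x => x) = m'.sum (fun _ x => x) + 1 := by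
  rw [Finsupp.sum_add_index' (fun _ => rfl) (fun _ _ _ => rfl), Finsupp.sum_single_index rfl]

lemma dsNorm1_add_single (m' : ℕ →₀ ℕ) (c : ℕ) :
    dsNorm1 (m' + Finsupp.single c 1) = dsNorm1 m' + c := by
  unfold dsNorm1
  rw [Finsupp.sum_add_index' (fun a => by simp) (fun a x y => by ring),
    Finsupp.sum_single_index (by simp), mul_one]

lemma prod_fact_sub_eq (m' : ℕ →₀ ℕ) (c : ℕ) (w w' : ℕ → ℕ)
    (h : ∀ c', (m' + Finsupp.single c 1 : ℕ →₀ ℕ) c' - w c' = m' c' - w' c') :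
    ∏ c' ∈ (m' + Finsupp.single c 1).support, Nat.factorial ((m' + Finsupp.single c 1 : ℕ →₀ ℕ) c' - w c')
      = ∏ c' ∈ m'.support, Nat.factorial (m' c' - w' c') := by
  rw [support_add_single]
  have hpt : ∀ c' ∈ insert c m'.support,
      Nat.factorial ((m' + Finsupp.single c 1 : ℕ →₀ ℕ) c' - w c') = Nat.factorial (m' c' - w' c') :=
    fun c' _ => by rw [h c']
  rw [Finset.prod_congr rfl hpt]
  by_cases hc : c ∈ m'.support
  · rw [Finset.insert_eq_self.2 hc]
  · rw [Finset.prod_insert hc]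
    have h0 : m' c = 0 := by simpa [Finsupp.mem_support_iff] using hc
    simp [h0, Nat.zero_sub, Nat.factorial]

lemma prod_fact_sub_succ (m' : ℕ →₀ ℕ) (c : ℕ) (w : ℕ → ℕ) (h : w c ≤ m' c) :
    ∏ c' ∈ (m' + Finsupp.single c 1).support, Nat.factorial ((m' + Finsupp.single c 1 : ℕ →₀ ℕ) c' - w c')
      = (m' c + 1 - w c) * ∏ c' ∈ m'.support, Nat.factorial (m' c' - w c') := by
  classical
  have hmem : c ∈ insert c m'.support := Finset.mem_insert_self _ _
  have hsub : m'.support ⊆ insert c m'.support := Finset.subset_insert _ _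
  have hR : ∏ c' ∈ m'.support, Nat.factorial (m' c' - w c')
      = ∏ c' ∈ insert c m'.support, Nat.factorial (m' c' - w c') := by
    refine Finset.prod_subset hsub fun x _ hx => ?_
    have h0 : m' x = 0 := by simpa [Finsupp.mem_support_iff] using hx
    simp [h0, Nat.zero_sub, Nat.factorial]
  rw [support_add_single, hR, ← Finset.mul_prod_erase _ _ hmem, ← Finset.mul_prod_erase _ _ hmem]
  have hpt : ∀ c' ∈ (insert c m'.support).erase c,
      Nat.factorial ((m' + Finsupp.single c 1 : ℕ →₀ ℕ) c' - w c') = Nat.factorial (m' c' - w c') := by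
    intro c' hc'
    have : c ≠ c' := fun hh => (Finset.mem_erase.1 hc').1 hh.symm
    rw [add_single_apply, if_neg this, add_zero]
  rw [Finset.prod_congr rfl hpt, add_single_apply, if_pos rfl, ← mul_assoc]
  congr 1
  have hs : m' c + 1 - w c = (m' c - w c) + 1 := by omega
  rw [hs, Nat.factorial_succ]

lemma prod_fact_ne_zero (m : ℕ →₀ ℕ) (w : ℕ → ℕ) :
    ∏ c' ∈ m.support, Nat.factorial (m c' - w c') ≠ 0 :=
  Finset.prod_ne_zero_iff.2 fun _ _ => Nat.factorial_ne_zero _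

lemma ncard_biUnion {α ι : Type*} (s : Finset ι) (f : ι → Set α)
    (hf : ∀ i ∈ s, (f i).Finite)
    (hd : ∀ i ∈ s, ∀ j ∈ s, i ≠ j → Disjoint (f i) (f j)) :
    (⋃ i ∈ s, f i).ncard = ∑ i ∈ s, (f i).ncard := by
  classical
  induction s using Finset.induction with
  | empty => simp
  | @insert a s ha ih =>
    rw [Finset.sum_insert ha, Finset.set_biUnion_insert]
    have hfin : (⋃ i ∈ s, f i).Finite :=
      Set.Finite.biUnion s.finite_toSet fun i hi => hf i (Finset.mem_insert_of_mem hi)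
    rw [Set.ncard_union_eq ?_ (hf a (Finset.mem_insert_self a s)) hfin,
      ih (fun i hi => hf i (Finset.mem_insert_of_mem hi))
        (fun i hi j hj hij => hd i (Finset.mem_insert_of_mem hi) j
          (Finset.mem_insert_of_mem hj) hij)]
    exact Set.disjoint_iUnion₂_right.2 fun i hi =>
      hd a (Finset.mem_insert_self a s) i (Finset.mem_insert_of_mem hi)
        (fun h => ha (h ▸ hi))

lemma stats_decomp {g : List PlaneTree} {rest : List PlaneTree} {m : ℕ →₀ ℕ}
    (h : ∀ c', fdc (node g :: rest) c' = m c') (c' : ℕ) :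
    fdc (g ++ rest) c' = (m - Finsupp.single g.length 1 : ℕ →₀ ℕ) c' := by
  have h1 := h c'
  rw [fdc_cons, degCount_node] at h1
  rw [fdc_append, Finsupp.tsub_apply, Finsupp.single_apply]
  omega

lemma stats_mem {g : List PlaneTree} {rest : List PlaneTree} {m : ℕ →₀ ℕ}
    (h : ∀ c', fdc (node g :: rest) c' = m c') : m g.length ≠ 0 := by
  have h1 := h g.length
  rw [fdc_cons, degCount_node] at h1
  simp at h1
  omega

lemma length_take_eq {l' : List PlaneTree} {c : ℕ} (h : c ≤ l'.length) :
    (l'.take c).length = c := by simp [h]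

lemma stats_recomp {l' : List PlaneTree} {m : ℕ →₀ ℕ} {c : ℕ} (hc : m c ≠ 0)
    (hlen : c ≤ l'.length) (h : ∀ c', fdc l' c' = (m - Finsupp.single c 1 : ℕ →₀ ℕ) c')
    (c' : ℕ) : fdc (headCons c l') c' = m c' := by
  have h1 := h c'
  rw [Finsupp.tsub_apply, Finsupp.single_apply] at h1
  have h2 : fdc (l'.take c) c' + fdc (l'.drop c) c' = fdc l' c' := by
    rw [← fdc_append, List.take_append_drop]
  rw [headCons, fdc_cons, degCount_node, length_take_eq hlen]
  by_cases hcc : c = c' <;> simp [hcc] at h1 h2 hc ⊢ <;> omega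

lemma headCons_length {l' : List PlaneTree} {c r : ℕ} (h : l'.length = r + c) :
    (headCons c l').length = r + 1 := by
  simp [headCons, h]

lemma forest_decomp (r : ℕ) (m : ℕ →₀ ℕ) :
    forestSet (r + 1) m = ⋃ c ∈ m.support,
      headCons c '' forestSet (r + c) (m - Finsupp.single c 1) := by
  ext l
  constructor
  · rintro ⟨hlen, hstats⟩
    obtain ⟨t, rest, rfl⟩ : ∃ t rest, l = t :: rest := by
      cases l with
      | nil => simp at hlen
      | cons t rest => exact ⟨_, _, rfl⟩
    obtain ⟨g, rfl⟩ : ∃ g, t = node g := by cases t; exact ⟨_, rfl⟩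
    have hc : m g.length ≠ 0 := stats_mem hstats
    refine Set.mem_biUnion (Finsupp.mem_support_iff.2 hc)
      ⟨g ++ rest, ⟨?_, stats_decomp hstats⟩, ?_⟩
    · simp at hlen; simp [hlen]; omega
    · simp [headCons, List.take_left, List.drop_left]
  · intro hl
    simp only [Set.mem_iUnion, Set.mem_image] at hl
    obtain ⟨c, hc, l', ⟨hlen, hstats⟩, rfl⟩ := hl
    have hcle : c ≤ l'.length := by omega
    exact ⟨headCons_length hlen, stats_recomp (Finsupp.mem_support_iff.1 hc) hcle hstats⟩

lemma exists_cons_of_length {l : List PlaneTree} {r : ℕ} (h : l.length = r + 1) :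
    ∃ g rest, l = node g :: rest := by
  cases l with
  | nil => simp at h
  | cons t rest => cases t with | node g => exact ⟨g, rest, rfl⟩

lemma spine_decomp_a (k : ℕ) (d : ℕ → ℕ) (r : ℕ) (m : ℕ →₀ ℕ) (s' : ℕ) :
    spineSet k d (r + 1) m (s' + 1) = ⋃ c ∈ m.support,
      (fun p : List PlaneTree × List ℕ => (headCons c p.1, p.2)) ''
        spineSet k d (r + c) (m - Finsupp.single c 1) (c + s') := by
  ext ⟨l, v⟩
  constructor
  · rintro ⟨hlen, hstats, t0, hget, hvert, hlv, hspine⟩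
    obtain ⟨g, rest, rfl⟩ := exists_cons_of_length hlen
    have hc := stats_mem hstats
    simp only [List.length_cons] at hlen
    refine Set.mem_biUnion (Finsupp.mem_support_iff.2 hc)
      ⟨(g ++ rest, v), ⟨?_, stats_decomp hstats, t0, ?_, hvert, hlv, hspine⟩, ?_⟩
    · simp; omega
    · rw [List.getElem?_append_right (by omega)]
      simpa [Nat.add_sub_cancel_left] using hget
    · simp [headCons, List.take_left, List.drop_left]
  · intro hl
    simp only [Set.mem_iUnion, Set.mem_image] at hl
    obtain ⟨c, hcm, ⟨l', v'⟩, ⟨hlen, hstats, t0, hget, hvert, hlv, hspine⟩, heq⟩ := hl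
    cases heq
    dsimp only at hlen hstats hget hvert hlv hspine
    have hcle : c ≤ l'.length := by omega
    refine ⟨headCons_length hlen, stats_recomp (Finsupp.mem_support_iff.1 hcm) hcle hstats,
      t0, ?_, hvert, hlv, hspine⟩
    have hget' : (l'.drop c)[s']? = some t0 := by
      rw [← List.take_append_drop c l',
        List.getElem?_append_right (by rw [length_take_eq hcle]; omega),
        length_take_eq hcle, Nat.add_sub_cancel_left] at hget
      exact hget
    simpa [headCons] using hget'

lemma spine_decomp_b (k : ℕ) (d : ℕ → ℕ) (r : ℕ) (m : ℕ →₀ ℕ) (hd0 : m (d 0) ≠ 0) :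
    spineSet (k + 1) d (r + 1) m 0 = ⋃ j ∈ Finset.range (d 0),
      (fun p : List PlaneTree × List ℕ => (headCons (d 0) p.1, j :: p.2)) ''
        spineSet k (fun i => d (i + 1)) (r + d 0) (m - Finsupp.single (d 0) 1) j := by
  ext ⟨l, v⟩
  constructor
  · rintro ⟨hlen, hstats, t0, hget, hvert, hlv, hspine⟩
    obtain ⟨g, rest, rfl⟩ := exists_cons_of_length hlen
    have ht0 : t0 = node g := by simpa using hget.symm
    subst ht0
    have hg : g.length = d 0 := by
      have := hspine 0 (by omega)
      simpa [degAt_nil] using this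
    obtain ⟨j, v', rfl⟩ : ∃ j v', v = j :: v' := by
      cases v with
      | nil => simp at hlv
      | cons j v' => exact ⟨j, v', rfl⟩
    obtain ⟨tj, hj, hvj⟩ := isVertex_cons_elim hvert
    have hjlt : j < d 0 := by
      obtain ⟨hh, -⟩ := List.getElem?_eq_some_iff.1 hj
      omega
    have hc : m g.length ≠ 0 := stats_mem hstats
    simp only [List.length_cons] at hlen
    refine Set.mem_biUnion (Finset.mem_range.2 hjlt)
      ⟨(g ++ rest, v'), ⟨?_, ?_, tj, ?_, hvj, by simpa using hlv, ?_⟩, ?_⟩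
    · simp; omega
    · rw [← hg]; exact stats_decomp hstats
    · rw [List.getElem?_append_left (by omega)]; exact hj
    · intro i hi
      have := hspine (i + 1) (by omega)
      rwa [List.take_succ_cons, degAt_cons hj] at this
    · rw [← hg]
      simp [headCons, List.take_left, List.drop_left]
  · intro hl
    simp only [Set.mem_iUnion, Set.mem_image] at hl
    obtain ⟨j, hj, ⟨l', v'⟩, ⟨hlen, hstats, t0, hget, hvert, hlv, hspine⟩, heq⟩ := hl
    cases heq
    dsimp only at hlen hstats hget hvert hlv hspine
    rw [Finset.mem_range] at hj
    have hcle : d 0 ≤ l'.length := by omega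
    have htake : (l'.take (d 0))[j]? = some t0 := by
      rw [List.getElem?_take_of_lt hj]
      rw [← List.take_append_drop (d 0) l', List.getElem?_append_left (by rw [length_take_eq hcle]; omega),
        List.getElem?_take_of_lt hj] at hget
      exact hget
    refine ⟨headCons_length hlen, stats_recomp hd0 hcle hstats,
      node (l'.take (d 0)), rfl, (isVertex_cons_iff htake).2 hvert, by simpa using hlv, ?_⟩
    intro i hi
    cases i with
    | zero => simp [degAt_nil, length_take_eq hcle]
    | succ i' =>
      rw [List.take_succ_cons, degAt_cons htake]
      exact hspine i' (by omega)

lemma spine_empty_b (k : ℕ) (d : ℕ → ℕ) (r : ℕ) (m : ℕ →₀ ℕ) (hd0 : m (d 0) = 0) :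
    spineSet (k + 1) d (r + 1) m 0 = ∅ := by
  ext ⟨l, v⟩
  simp only [Set.mem_empty_iff_false, iff_false]
  rintro ⟨hlen, hstats, t0, hget, hvert, hlv, hspine⟩
  obtain ⟨g, rest, rfl⟩ := exists_cons_of_length hlen
  have ht0 : t0 = node g := by simpa using hget.symm
  subst ht0
  have hg : g.length = d 0 := by
    have := hspine 0 (by omega)
    simpa [degAt_nil] using this
  exact stats_mem hstats (hg ▸ hd0)

lemma spine_decomp_c (d : ℕ → ℕ) (r : ℕ) (m : ℕ →₀ ℕ) :
    spineSet 0 d (r + 1) m 0 =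
      (fun l => (l, ([] : List ℕ))) '' forestSet (r + 1) m ∪
      ⋃ c ∈ m.support, ⋃ j ∈ Finset.range c,
        (fun p : List PlaneTree × List ℕ => (headCons c p.1, j :: p.2)) ''
          spineSet 0 d (r + c) (m - Finsupp.single c 1) j := by
  ext ⟨l, v⟩
  constructor
  · rintro ⟨hlen, hstats, t0, hget, hvert, hlv, hspine⟩
    obtain ⟨g, rest, rfl⟩ := exists_cons_of_length hlen
    have ht0 : t0 = node g := by simpa using hget.symm
    subst ht0
    cases v with
    | nil => exact Or.inl ⟨node g :: rest, ⟨hlen, hstats⟩, rfl⟩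
    | cons j v' =>
      right
      obtain ⟨tj, hj, hvj⟩ := isVertex_cons_elim hvert
      have hjlt : j < g.length := by
        obtain ⟨hh, -⟩ := List.getElem?_eq_some_iff.1 hj
        omega
      have hc : m g.length ≠ 0 := stats_mem hstats
      simp only [List.length_cons] at hlen
      refine Set.mem_biUnion (Finsupp.mem_support_iff.2 hc) ?_
      refine Set.mem_biUnion (Finset.mem_range.2 hjlt)
        ⟨(g ++ rest, v'), ⟨?_, stats_decomp hstats, tj, ?_, hvj, Nat.zero_le _, fun i hi => absurd hi (by omega)⟩, ?_⟩
      · simp; omega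
      · rw [List.getElem?_append_left (by omega)]; exact hj
      · simp [headCons, List.take_left, List.drop_left]
  · intro hl
    rcases hl with ⟨l₀, ⟨hlen, hstats⟩, heq⟩ | hl
    · cases heq
      obtain ⟨g, rest, rfl⟩ := exists_cons_of_length hlen
      exact ⟨hlen, hstats, node g, rfl, isVertex_nil _, by simp, by omega⟩
    · simp only [Set.mem_iUnion, Set.mem_image] at hl
      obtain ⟨c, hcm, j, hj, ⟨l', v'⟩, ⟨hlen, hstats, t0, hget, hvert, hlv, hspine⟩, heq⟩ := hl
      cases heq
      dsimp only at hlen hstats hget hvert hlv hspine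
      rw [Finset.mem_range] at hj
      have hcle : c ≤ l'.length := by omega
      have htake : (l'.take c)[j]? = some t0 := by
        rw [List.getElem?_take_of_lt hj]
        rw [← List.take_append_drop c l', List.getElem?_append_left (by rw [length_take_eq hcle]; omega),
          List.getElem?_take_of_lt hj] at hget
        exact hget
      exact ⟨headCons_length hlen, stats_recomp (Finsupp.mem_support_iff.1 hcm) hcle hstats,
        node (l'.take c), rfl, (isVertex_cons_iff htake).2 hvert, by simp, by omega⟩

lemma inj_pair_a (c : ℕ) :
    Function.Injective (fun p : List PlaneTree × List ℕ => (headCons c p.1, p.2)) := by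
  rintro ⟨a1, a2⟩ ⟨b1, b2⟩ h
  simp only [Prod.mk.injEq] at h
  obtain ⟨h1, h2⟩ := h
  cases headCons_injective c h1
  cases h2
  rfl

lemma inj_pair_b (c j : ℕ) :
    Function.Injective (fun p : List PlaneTree × List ℕ => (headCons c p.1, j :: p.2)) := by
  rintro ⟨a1, a2⟩ ⟨b1, b2⟩ h
  simp only [Prod.mk.injEq, List.cons.injEq, true_and] at h
  obtain ⟨h1, h2⟩ := h
  cases headCons_injective c h1
  cases h2
  rfl

lemma headCons_eq_len {c₁ c₂ : ℕ} {l₁ l₂ : List PlaneTree}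
    (h1 : c₁ ≤ l₁.length) (h2 : c₂ ≤ l₂.length) (heq : headCons c₁ l₁ = headCons c₂ l₂) :
    c₁ = c₂ := by
  simp only [headCons, List.cons.injEq, node.injEq] at heq
  rw [← length_take_eq h1, ← length_take_eq h2, heq.1]

lemma ncard_forest_decomp (r : ℕ) (m : ℕ →₀ ℕ)
    (hfin : ∀ c ∈ m.support, (forestSet (r + c) (m - Finsupp.single c 1)).Finite) :
    (forestSet (r + 1) m).Finite ∧
    (forestSet (r + 1) m).ncard
      = ∑ c ∈ m.support, (forestSet (r + c) (m - Finsupp.single c 1)).ncard := by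
  have hkey : ∀ c₁ ∈ m.support, ∀ c₂ ∈ m.support, c₁ ≠ c₂ →
      Disjoint (headCons c₁ '' forestSet (r + c₁) (m - Finsupp.single c₁ 1))
               (headCons c₂ '' forestSet (r + c₂) (m - Finsupp.single c₂ 1)) := by
    intro c₁ _ c₂ _ hne
    rw [Set.disjoint_left]
    rintro x ⟨l₁, ⟨hl₁, _⟩, rfl⟩ ⟨l₂, ⟨hl₂, _⟩, heq⟩
    exact hne (headCons_eq_len (by omega) (by omega) heq.symm)
  constructor
  · rw [forest_decomp]
    exact Set.Finite.biUnion m.support.finite_toSet fun c hc => (hfin c hc).image _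
  · rw [forest_decomp, ncard_biUnion _ _ (fun c hc => (hfin c hc).image _) hkey]
    exact Finset.sum_congr rfl fun c hc =>
      Set.ncard_image_of_injective _ (headCons_injective c)

lemma ncard_spine_a (k : ℕ) (d : ℕ → ℕ) (r : ℕ) (m : ℕ →₀ ℕ) (s' : ℕ)
    (hfin : ∀ c ∈ m.support,
      (spineSet k d (r + c) (m - Finsupp.single c 1) (c + s')).Finite) :
    (spineSet k d (r + 1) m (s' + 1)).Finite ∧
    (spineSet k d (r + 1) m (s' + 1)).ncard
      = ∑ c ∈ m.support, (spineSet k d (r + c) (m - Finsupp.single c 1) (c + s')).ncard := by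
  have hkey : ∀ c₁ ∈ m.support, ∀ c₂ ∈ m.support, c₁ ≠ c₂ →
      Disjoint ((fun p : List PlaneTree × List ℕ => (headCons c₁ p.1, p.2)) ''
          spineSet k d (r + c₁) (m - Finsupp.single c₁ 1) (c₁ + s'))
        ((fun p : List PlaneTree × List ℕ => (headCons c₂ p.1, p.2)) ''
          spineSet k d (r + c₂) (m - Finsupp.single c₂ 1) (c₂ + s')) := by
    intro c₁ _ c₂ _ hne
    rw [Set.disjoint_left]
    rintro x ⟨⟨l₁, v₁⟩, ⟨hl₁, _⟩, rfl⟩ ⟨⟨l₂, v₂⟩, ⟨hl₂, _⟩, heq⟩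
    dsimp only at hl₁ hl₂
    simp only [Prod.mk.injEq] at heq
    exact hne (headCons_eq_len (by omega) (by omega) heq.1.symm)
  constructor
  · rw [spine_decomp_a]
    exact Set.Finite.biUnion m.support.finite_toSet fun c hc => (hfin c hc).image _
  · rw [spine_decomp_a, ncard_biUnion _ _ (fun c hc => (hfin c hc).image _) hkey]
    exact Finset.sum_congr rfl fun c hc =>
      Set.ncard_image_of_injective _ (inj_pair_a c)

lemma ncard_spine_b (k : ℕ) (d : ℕ → ℕ) (r : ℕ) (m : ℕ →₀ ℕ) (hd0 : m (d 0) ≠ 0)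
    (hfin : ∀ j ∈ Finset.range (d 0), (spineSet k (fun i => d (i + 1)) (r + d 0)
      (m - Finsupp.single (d 0) 1) j).Finite) :
    (spineSet (k + 1) d (r + 1) m 0).Finite ∧
    (spineSet (k + 1) d (r + 1) m 0).ncard
      = ∑ j ∈ Finset.range (d 0), (spineSet k (fun i => d (i + 1)) (r + d 0)
          (m - Finsupp.single (d 0) 1) j).ncard := by
  have hkey : ∀ j₁ ∈ Finset.range (d 0), ∀ j₂ ∈ Finset.range (d 0), j₁ ≠ j₂ →
      Disjoint ((fun p : List PlaneTree × List ℕ => (headCons (d 0) p.1, j₁ :: p.2)) ''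
          spineSet k (fun i => d (i + 1)) (r + d 0) (m - Finsupp.single (d 0) 1) j₁)
        ((fun p : List PlaneTree × List ℕ => (headCons (d 0) p.1, j₂ :: p.2)) ''
          spineSet k (fun i => d (i + 1)) (r + d 0) (m - Finsupp.single (d 0) 1) j₂) := by
    intro j₁ _ j₂ _ hne
    rw [Set.disjoint_left]
    rintro x ⟨⟨l₁, v₁⟩, _, rfl⟩ ⟨⟨l₂, v₂⟩, _, heq⟩
    simp only [Prod.mk.injEq, List.cons.injEq] at heq
    exact hne heq.2.1.symm
  constructor
  · rw [spine_decomp_b _ _ _ _ hd0]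
    exact Set.Finite.biUnion (Finset.range (d 0)).finite_toSet fun j hj => (hfin j hj).image _
  · rw [spine_decomp_b _ _ _ _ hd0, ncard_biUnion _ _ (fun j hj => (hfin j hj).image _) hkey]
    exact Finset.sum_congr rfl fun j _ =>
      Set.ncard_image_of_injective _ (inj_pair_b (d 0) j)

lemma ncard_spine_c (d : ℕ → ℕ) (r : ℕ) (m : ℕ →₀ ℕ)
    (hfinF : (forestSet (r + 1) m).Finite)
    (hfin : ∀ c ∈ m.support, ∀ j ∈ Finset.range c,
      (spineSet 0 d (r + c) (m - Finsupp.single c 1) j).Finite) :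
    (spineSet 0 d (r + 1) m 0).Finite ∧
    (spineSet 0 d (r + 1) m 0).ncard
      = (forestSet (r + 1) m).ncard + ∑ c ∈ m.support, ∑ j ∈ Finset.range c,
          (spineSet 0 d (r + c) (m - Finsupp.single c 1) j).ncard := by
  classical
  set U : ℕ → Set (List PlaneTree × List ℕ) := fun c => ⋃ j ∈ Finset.range c,
    (fun p : List PlaneTree × List ℕ => (headCons c p.1, j :: p.2)) ''
      spineSet 0 d (r + c) (m - Finsupp.single c 1) j with hU
  have hUfin : ∀ c ∈ m.support, (U c).Finite := fun c hc =>
    Set.Finite.biUnion (Finset.range c).finite_toSet fun j hj => (hfin c hc j hj).image _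
  have hUcard : ∀ c ∈ m.support, (U c).ncard = ∑ j ∈ Finset.range c,
      (spineSet 0 d (r + c) (m - Finsupp.single c 1) j).ncard := by
    intro c hc
    rw [hU]
    have hkey : ∀ j₁ ∈ Finset.range c, ∀ j₂ ∈ Finset.range c, j₁ ≠ j₂ →
        Disjoint ((fun p : List PlaneTree × List ℕ => (headCons c p.1, j₁ :: p.2)) ''
            spineSet 0 d (r + c) (m - Finsupp.single c 1) j₁)
          ((fun p : List PlaneTree × List ℕ => (headCons c p.1, j₂ :: p.2)) ''
            spineSet 0 d (r + c) (m - Finsupp.single c 1) j₂) := by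
      intro j₁ _ j₂ _ hne
      rw [Set.disjoint_left]
      rintro x ⟨⟨l₁, v₁⟩, _, rfl⟩ ⟨⟨l₂, v₂⟩, _, heq⟩
      simp only [Prod.mk.injEq, List.cons.injEq] at heq
      exact hne heq.2.1.symm
    rw [ncard_biUnion _ _ (fun j hj => (hfin c hc j hj).image _) hkey]
    exact Finset.sum_congr rfl fun j _ =>
      Set.ncard_image_of_injective _ (inj_pair_b c j)
  have hUd : ∀ c₁ ∈ m.support, ∀ c₂ ∈ m.support, c₁ ≠ c₂ → Disjoint (U c₁) (U c₂) := by
    intro c₁ _ c₂ _ hne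
    rw [Set.disjoint_left]
    intro x hx₁ hx₂
    rw [hU] at hx₁ hx₂
    simp only [Set.mem_iUnion, Set.mem_image] at hx₁ hx₂
    obtain ⟨j₁, _, ⟨l₁, v₁⟩, ⟨hl₁, _⟩, rfl⟩ := hx₁
    obtain ⟨j₂, _, ⟨l₂, v₂⟩, ⟨hl₂, _⟩, heq⟩ := hx₂
    dsimp only at hl₁ hl₂
    simp only [Prod.mk.injEq] at heq
    exact hne (headCons_eq_len (by omega) (by omega) heq.1.symm)
  have hdisjRoot : Disjoint ((fun l => (l, ([] : List ℕ))) '' forestSet (r + 1) m)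
      (⋃ c ∈ m.support, U c) := by
    rw [Set.disjoint_left]
    rintro x ⟨l₀, _, rfl⟩ hx
    simp only [Set.mem_iUnion, hU, Set.mem_image] at hx
    obtain ⟨c, _, j, _, ⟨l', v'⟩, _, heq⟩ := hx
    simp only [Prod.mk.injEq] at heq
    exact List.cons_ne_nil _ _ heq.2
  have hUnionFin : (⋃ c ∈ m.support, U c).Finite :=
    Set.Finite.biUnion m.support.finite_toSet hUfin
  have hdec := spine_decomp_c d r m
  rw [show (⋃ c ∈ m.support, ⋃ j ∈ Finset.range c,
      (fun p : List PlaneTree × List ℕ => (headCons c p.1, j :: p.2)) ''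
        spineSet 0 d (r + c) (m - Finsupp.single c 1) j) = ⋃ c ∈ m.support, U c from rfl] at hdec
  constructor
  · rw [hdec]
    exact (hfinF.image _).union hUnionFin
  · rw [hdec, Set.ncard_union_eq hdisjRoot (hfinF.image _) hUnionFin,
      ncard_biUnion _ _ hUfin hUd,
      Set.ncard_image_of_injective _ (fun a b h => (Prod.mk.injEq _ _ _ _ ▸ h : _ ∧ _).1)]
    exact congrArg _ (Finset.sum_congr rfl hUcard)

lemma sum_eq_support_sum (m : ℕ →₀ ℕ) : m.sum (fun _ x => x) = ∑ c ∈ m.support, m c := rfl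

lemma dsNorm1_eq_support_sum (m : ℕ →₀ ℕ) : dsNorm1 m = ∑ c ∈ m.support, c * m c := rfl

lemma le_sumM (m : ℕ →₀ ℕ) (c : ℕ) : m c ≤ m.sum (fun _ x => x) := by
  by_cases h : m c = 0
  · omega
  · rw [sum_eq_support_sum]
    exact Finset.single_le_sum (fun _ _ => Nat.zero_le _) (Finsupp.mem_support_iff.2 h)

lemma le_dsNorm1 (m : ℕ →₀ ℕ) (c : ℕ) : c * m c ≤ dsNorm1 m := by
  by_cases h : m c = 0
  · simp [h]
  · rw [dsNorm1_eq_support_sum]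
    exact Finset.single_le_sum (f := fun c => c * m c) (fun _ _ => Nat.zero_le _)
      (Finsupp.mem_support_iff.2 h)

lemma eq_single_of_M1 {m : ℕ →₀ ℕ} (hsum : m.sum (fun _ x => x) = 1)
    (hds : dsNorm1 m = 0) : m = Finsupp.single 0 1 := by
  have h1 : ∀ c, c ≠ 0 → m c = 0 := by
    intro c hc
    have h2 := le_dsNorm1 m c
    rcases Nat.eq_zero_or_pos (m c) with h | h
    · exact h
    · exfalso
      have : c * m c ≥ 1 := Nat.one_le_iff_ne_zero.2 (Nat.mul_ne_zero hc (by omega))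
      omega
  have h0 : m = Finsupp.single 0 (m 0) := by
    ext c
    rcases Nat.eq_zero_or_pos c with rfl | hc
    · simp
    · rw [h1 c (by omega), Finsupp.single_apply, if_neg (by omega)]
  have : m.sum (fun _ x => x) = m 0 := by
    rw [h0, Finsupp.sum_single_index rfl]
    simp
  have hm0 : m 0 = 1 := by rw [← this]; exact hsum
  rw [h0, hm0]

lemma forestSet_one : forestSet 1 (Finsupp.single 0 1) = {[node []]} := by
  ext l
  constructor
  · rintro ⟨hl, hs⟩
    obtain ⟨t, rfl⟩ := List.length_eq_one_iff.1 hl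
    obtain ⟨g, rfl⟩ : ∃ g, t = node g := by cases t; exact ⟨_, rfl⟩
    have hg : g = [] := by
      rcases List.eq_nil_or_concat g with rfl | _
      · rfl
      · exfalso
        have h1 := hs g.length
        have h2 : g.length ≠ 0 := by
          rcases g with _ | ⟨a, g'⟩
          · simp_all
          · simp
        rw [fdc_cons, fdc_nil, Finsupp.single_apply, if_neg (by omega)] at h1
        have := degCount_self_pos g
        omega
    subst hg
    rfl
  · rintro rfl
    refine ⟨rfl, fun c => ?_⟩
    rw [fdc_cons, fdc_nil, degCount_node, fdc_nil, Finsupp.single_apply]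
    simp

lemma forest_count (M : ℕ) : 1 ≤ M → ∀ r m, m.sum (fun _ x => x) = M → dsNorm1 m + r = M →
    (forestSet r m).Finite ∧
    (forestSet r m).ncard * ∏ c ∈ m.support, Nat.factorial (m c)
      = r * Nat.factorial (M - 1) := by
  induction M using Nat.strong_induction_on with
  | _ M ih =>
  intro hM r m hsum hr
  rcases r with _ | r
  · have he : forestSet 0 m = ∅ := by
      ext l
      simp only [Set.mem_empty_iff_false, iff_false]
      rintro ⟨hl, hs⟩
      rw [List.length_eq_zero_iff] at hl
      subst hl
      have hm0 : m = 0 := by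
        ext c
        rw [← hs c, fdc_nil, Finsupp.coe_zero, Pi.zero_apply]
      rw [hm0] at hsum
      simp [Finsupp.sum_zero_index] at hsum
      omega
    rw [he]
    simp
  rcases Nat.lt_or_ge M 2 with hM2 | hM2
  · -- M = 1
    have hMeq : M = 1 := by omega
    subst hMeq
    have hds : dsNorm1 m = 0 := by omega
    have hr1 : r = 0 := by omega
    subst hr1
    have hm := eq_single_of_M1 hsum hds
    subst hm
    rw [forestSet_one]
    refine ⟨Set.finite_singleton _, ?_⟩
    rw [Set.ncard_singleton]
    have hsupp : (Finsupp.single 0 1 : ℕ →₀ ℕ).support = {0} := Finsupp.support_single_ne_zero _ one_ne_zero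
    rw [hsupp]
    simp
  · -- M ≥ 2
    have hpieces : ∀ c ∈ m.support,
        (forestSet (r + c) (m - Finsupp.single c 1)).Finite ∧
        (forestSet (r + c) (m - Finsupp.single c 1)).ncard
          * ∏ c' ∈ (m - Finsupp.single c 1).support,
              Nat.factorial ((m - Finsupp.single c 1 : ℕ →₀ ℕ) c')
          = (r + c) * Nat.factorial (M - 2) := by
      intro c hc
      have hcne := Finsupp.mem_support_iff.1 hc
      have hm' := sub_add_single hcne
      have hsum' : (m - Finsupp.single c 1).sum (fun _ x => x) = M - 1 := by
        have := sumM_add_single (m - Finsupp.single c 1) c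
        rw [hm'] at this
        omega
      have hds' : dsNorm1 (m - Finsupp.single c 1) + (r + c) = M - 1 := by
        have := dsNorm1_add_single (m - Finsupp.single c 1) c
        rw [hm'] at this
        omega
      have := ih (M - 1) (by omega) (by omega) (r + c) _ hsum' hds'
      rw [show M - 1 - 1 = M - 2 by omega] at this
      exact this
    obtain ⟨hfin, hcard⟩ := ncard_forest_decomp r m (fun c hc => (hpieces c hc).1)
    refine ⟨hfin, ?_⟩
    rw [hcard, Finset.sum_mul]
    have hterm : ∀ c ∈ m.support,
        (forestSet (r + c) (m - Finsupp.single c 1)).ncard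
          * ∏ c' ∈ m.support, Nat.factorial (m c')
        = m c * ((r + c) * Nat.factorial (M - 2)) := by
      intro c hc
      have hcne := Finsupp.mem_support_iff.1 hc
      have hm' := sub_add_single hcne
      have hprod := prod_fact_sub_succ (m - Finsupp.single c 1) c (fun _ => 0)
        (Nat.zero_le _)
      simp only [Nat.sub_zero] at hprod
      rw [hm'] at hprod
      have hmc : m c = (m - Finsupp.single c 1 : ℕ →₀ ℕ) c + 1 := by
        rw [Finsupp.tsub_apply, Finsupp.single_apply, if_pos rfl]
        omega
      rw [hprod, ← hmc, ← mul_assoc, mul_comm _ (m c), mul_assoc,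
        (hpieces c hc).2]
    rw [Finset.sum_congr rfl hterm]
    have hsum2 : ∑ c ∈ m.support, m c * (r + c) = (r + 1) * (M - 1) := by
      have h1 : ∑ c ∈ m.support, m c * (r + c)
          = r * (∑ c ∈ m.support, m c) + ∑ c ∈ m.support, c * m c := by
        rw [Finset.mul_sum, ← Finset.sum_add_distrib]
        exact Finset.sum_congr rfl fun c _ => by ring
      rw [h1, ← sum_eq_support_sum, ← dsNorm1_eq_support_sum, hsum]
      have hle : r + 1 ≤ M := by omega
      obtain ⟨t, ht⟩ := Nat.le.dest hle
      have hds : dsNorm1 m = t := by omega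
      rw [hds, ← ht, show r + 1 + t - 1 = r + t by omega]
      ring
    have hfacts : ∀ c ∈ m.support, m c * ((r + c) * Nat.factorial (M - 2))
        = m c * (r + c) * Nat.factorial (M - 2) := fun c _ => by ring
    have hfac : Nat.factorial (M - 1) = (M - 1) * Nat.factorial (M - 2) := by
      conv_lhs => rw [show M - 1 = (M - 2) + 1 by omega]
      rw [Nat.factorial_succ, show M - 2 + 1 = M - 1 by omega]
    rw [Finset.sum_congr rfl hfacts, ← Finset.sum_mul, hsum2, hfac]
    ring

lemma wfn_zero (d : ℕ → ℕ) (c : ℕ) : wfn 0 d c = 0 := by simp [wfn]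

lemma wfn_succ (k : ℕ) (d : ℕ → ℕ) (c : ℕ) :
    wfn (k + 1) d c = wfn k (fun i => d (i + 1)) c + (if d 0 = c then 1 else 0) := by
  unfold wfn
  rw [Finset.card_filter, Finset.card_filter, Finset.sum_range_succ']

lemma wfn_head_pos (k : ℕ) (d : ℕ → ℕ) : 1 ≤ wfn (k + 1) d (d 0) :=
  Finset.card_pos.2 ⟨0, Finset.mem_filter.2 ⟨Finset.mem_range.2 (by omega), rfl⟩⟩

lemma sum_wfn (k : ℕ) (d : ℕ → ℕ) (m : ℕ →₀ ℕ) (hcond : ∀ c, wfn k d c ≤ m c) :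
    ∑ c ∈ m.support, wfn k d c = k := by
  classical
  have h1 : ((Finset.range k).image d) ⊆ m.support := by
    intro c hc
    obtain ⟨i, hi, rfl⟩ := Finset.mem_image.1 hc
    have hw : 1 ≤ wfn k d (d i) :=
      Finset.card_pos.2 ⟨i, Finset.mem_filter.2 ⟨hi, rfl⟩⟩
    have := hcond (d i)
    exact Finsupp.mem_support_iff.2 (by omega)
  have h2 : ∑ c ∈ (Finset.range k).image d, wfn k d c = ∑ c ∈ m.support, wfn k d c := by
    refine Finset.sum_subset h1 fun c _ hc => ?_
    by_contra h
    have hw : 1 ≤ wfn k d c := by unfold wfn at h ⊢; omega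
    obtain ⟨i, hi⟩ := Finset.card_pos.1 hw
    rw [Finset.mem_filter] at hi
    exact hc (Finset.mem_image.2 ⟨i, hi.1, hi.2⟩)
  rw [← h2]
  have h3 := Finset.card_eq_sum_card_fiberwise
    (f := d) (s := Finset.range k) (t := (Finset.range k).image d)
    (fun i hi => Finset.mem_image_of_mem d hi)
  rw [Finset.card_range] at h3
  unfold wfn
  exact h3.symm

lemma spine_count (M : ℕ) : ∀ (k : ℕ) (d : ℕ → ℕ) (r : ℕ) (m : ℕ →₀ ℕ) (s : ℕ),
    m.sum (fun _ x => x) = M → dsNorm1 m + r = M → s < r →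
    (spineSet k d r m s).Finite ∧
    ((∀ c, wfn k d c ≤ m c) →
      (spineSet k d r m s).ncard * ∏ c ∈ m.support, Nat.factorial (m c - wfn k d c)
        = (∏ i ∈ Finset.range k, d i) * Nat.factorial (M - k)) ∧
    (¬ (∀ c, wfn k d c ≤ m c) → (spineSet k d r m s).ncard = 0) := by
  induction M using Nat.strong_induction_on with
  | _ M ih =>
  intro k d r m s hsum hr hsr
  rcases r with _ | r
  · omega
  have hM1 : 1 ≤ M := by omega
  have hpieceH : ∀ c, m c ≠ 0 →
      (m - Finsupp.single c 1).sum (fun _ x => x) = M - 1 ∧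
      dsNorm1 (m - Finsupp.single c 1) + (r + c) = M - 1 := by
    intro c hc
    have hm' := sub_add_single hc
    constructor
    · have := sumM_add_single (m - Finsupp.single c 1) c
      rw [hm'] at this
      omega
    · have := dsNorm1_add_single (m - Finsupp.single c 1) c
      rw [hm'] at this
      omega
  rcases s with _ | s'
  · rcases k with _ | k'
    · -- k = 0, s = 0
      have hcond0 : ∀ c, wfn 0 d c ≤ m c := fun c => by rw [wfn_zero]; omega
      have hF := forest_count M hM1 (r + 1) m hsum (by omega)
      have hpiece : ∀ c ∈ m.support, ∀ j ∈ Finset.range c,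
          (spineSet 0 d (r + c) (m - Finsupp.single c 1) j).Finite ∧
          (spineSet 0 d (r + c) (m - Finsupp.single c 1) j).ncard
            * ∏ c' ∈ (m - Finsupp.single c 1).support,
                Nat.factorial ((m - Finsupp.single c 1 : ℕ →₀ ℕ) c') = Nat.factorial (M - 1) := by
        intro c hc j hj
        rw [Finset.mem_range] at hj
        have hcne := Finsupp.mem_support_iff.1 hc
        obtain ⟨hsum', hds'⟩ := hpieceH c hcne
        have := ih (M - 1) (by omega) 0 d (r + c) (m - Finsupp.single c 1) j hsum' hds'
          (by omega)
        refine ⟨this.1, ?_⟩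
        have heq := this.2.1 (fun c' => by rw [wfn_zero]; omega)
        simp only [wfn_zero, Nat.sub_zero, Finset.range_zero, Finset.prod_empty, one_mul]
          at heq
        rw [heq]
      obtain ⟨hfin, hcard⟩ := ncard_spine_c d r m hF.1 (fun c hc j hj => (hpiece c hc j hj).1)
      refine ⟨hfin, ?_, fun hn => absurd hcond0 hn⟩
      intro _
      simp only [wfn_zero, Nat.sub_zero, Finset.range_zero, Finset.prod_empty, one_mul]
      rw [hcard, add_mul, hF.2, Finset.sum_mul]
      have hterm : ∀ c ∈ m.support,
          (∑ j ∈ Finset.range c,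
            (spineSet 0 d (r + c) (m - Finsupp.single c 1) j).ncard)
            * ∏ c' ∈ m.support, Nat.factorial (m c')
          = c * (m c * Nat.factorial (M - 1)) := by
        intro c hc
        have hcne := Finsupp.mem_support_iff.1 hc
        have hm' := sub_add_single hcne
        have hprod := prod_fact_sub_succ (m - Finsupp.single c 1) c (fun _ => 0)
          (Nat.zero_le _)
        simp only [Nat.sub_zero] at hprod
        rw [hm'] at hprod
        have hmc : m c = (m - Finsupp.single c 1 : ℕ →₀ ℕ) c + 1 := by
          rw [Finsupp.tsub_apply, Finsupp.single_apply, if_pos rfl]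
          omega
        rw [hprod, ← hmc, Finset.sum_mul]
        have : ∀ j ∈ Finset.range c,
            (spineSet 0 d (r + c) (m - Finsupp.single c 1) j).ncard
              * (m c * ∏ c' ∈ (m - Finsupp.single c 1).support,
                  Nat.factorial ((m - Finsupp.single c 1 : ℕ →₀ ℕ) c'))
            = m c * Nat.factorial (M - 1) := by
          intro j hj
          rw [← mul_assoc, mul_comm _ (m c), mul_assoc, (hpiece c hc j hj).2]
        rw [Finset.sum_congr rfl this, Finset.sum_const, Finset.card_range, smul_eq_mul]
      rw [Finset.sum_congr rfl hterm]
      have h5 : ∀ c ∈ m.support, c * (m c * Nat.factorial (M - 1))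
          = (c * m c) * Nat.factorial (M - 1) := fun c _ => by ring
      rw [Finset.sum_congr rfl h5, ← Finset.sum_mul, ← dsNorm1_eq_support_sum]
      have h6 : (r + 1) * (M - 1).factorial + dsNorm1 m * (M - 1).factorial
          = M * (M - 1).factorial := by
        have : r + 1 + dsNorm1 m = M := by omega
        rw [← add_mul, show r + 1 + dsNorm1 m = M by omega]
      rw [h6]
      exact Nat.mul_factorial_pred (by omega)
    · -- k = k' + 1, s = 0
      by_cases hd0 : m (d 0) = 0
      · rw [spine_empty_b k' d r m hd0]
        refine ⟨Set.finite_empty, ?_, fun _ => by simp⟩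
        intro hcond
        exfalso
        have h1 := hcond (d 0)
        have h2 := wfn_head_pos k' d
        omega
      · have hm' := sub_add_single hd0
        obtain ⟨hsum', hds'⟩ := hpieceH (d 0) hd0
        have hpiece : ∀ j ∈ Finset.range (d 0),
            (spineSet k' (fun i => d (i + 1)) (r + d 0)
              (m - Finsupp.single (d 0) 1) j).Finite ∧
            ((∀ c', wfn k' (fun i => d (i + 1)) c'
                ≤ (m - Finsupp.single (d 0) 1 : ℕ →₀ ℕ) c') →
              (spineSet k' (fun i => d (i + 1)) (r + d 0)
                  (m - Finsupp.single (d 0) 1) j).ncard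
                * ∏ c' ∈ (m - Finsupp.single (d 0) 1).support,
                    Nat.factorial ((m - Finsupp.single (d 0) 1 : ℕ →₀ ℕ) c'
                      - wfn k' (fun i => d (i + 1)) c')
                = (∏ i ∈ Finset.range k', d (i + 1)) * Nat.factorial (M - 1 - k')) ∧
            (¬ (∀ c', wfn k' (fun i => d (i + 1)) c'
                ≤ (m - Finsupp.single (d 0) 1 : ℕ →₀ ℕ) c') →
              (spineSet k' (fun i => d (i + 1)) (r + d 0)
                  (m - Finsupp.single (d 0) 1) j).ncard = 0) := fun j hj =>
          ih (M - 1) (by omega) k' (fun i => d (i + 1)) (r + d 0)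
            (m - Finsupp.single (d 0) 1) j hsum' hds'
            (by rw [Finset.mem_range] at hj; omega)
        obtain ⟨hfin, hcard⟩ := ncard_spine_b k' d r m hd0 (fun j hj => (hpiece j hj).1)
        have hQ : ∏ c' ∈ m.support, Nat.factorial (m c' - wfn (k' + 1) d c')
            = ∏ c' ∈ (m - Finsupp.single (d 0) 1).support,
                Nat.factorial ((m - Finsupp.single (d 0) 1 : ℕ →₀ ℕ) c'
                  - wfn k' (fun i => d (i + 1)) c') := by
          conv_lhs => rw [← hm']
          refine prod_fact_sub_eq _ (d 0) _ _ fun c' => ?_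
          rw [add_single_apply, wfn_succ]
          by_cases h : d 0 = c' <;> simp [h] <;> omega
        have hcondiff : (∀ c, wfn (k' + 1) d c ≤ m c)
            ↔ (∀ c, wfn k' (fun i => d (i + 1)) c
                ≤ (m - Finsupp.single (d 0) 1 : ℕ →₀ ℕ) c) := by
          constructor
          · intro h c
            have h1 := h c
            rw [wfn_succ] at h1
            rw [Finsupp.tsub_apply, Finsupp.single_apply]
            by_cases hc : d 0 = c
            · subst hc; simp at h1 ⊢; omega
            · simp [hc] at h1 ⊢; omega
          · intro h c
            have h1 := h c
            rw [wfn_succ]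
            rw [Finsupp.tsub_apply, Finsupp.single_apply] at h1
            by_cases hc : d 0 = c
            · subst hc; simp at h1 ⊢; omega
            · simp [hc] at h1 ⊢; omega
        refine ⟨hfin, ?_, ?_⟩
        · intro hcond
          rw [hcard, Finset.sum_mul, hQ]
          have hterm : ∀ j ∈ Finset.range (d 0),
              (spineSet k' (fun i => d (i + 1)) (r + d 0)
                (m - Finsupp.single (d 0) 1) j).ncard
                * ∏ c' ∈ (m - Finsupp.single (d 0) 1).support,
                    Nat.factorial ((m - Finsupp.single (d 0) 1 : ℕ →₀ ℕ) c'
                      - wfn k' (fun i => d (i + 1)) c')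
              = (∏ i ∈ Finset.range k', d (i + 1)) * Nat.factorial (M - 1 - k') :=
            fun j hj => (hpiece j hj).2.1 (hcondiff.1 hcond)
          rw [Finset.sum_congr rfl hterm, Finset.sum_const, Finset.card_range, smul_eq_mul,
            Finset.prod_range_succ', show M - (k' + 1) = M - 1 - k' by omega]
          ring
        · intro hn
          rw [hcard]
          exact Finset.sum_eq_zero fun j hj => (hpiece j hj).2.2 (fun h => hn (hcondiff.2 h))
  · -- s = s' + 1
    have hpiece : ∀ c ∈ m.support,
        (spineSet k d (r + c) (m - Finsupp.single c 1) (c + s')).Finite ∧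
        ((∀ c', wfn k d c' ≤ (m - Finsupp.single c 1 : ℕ →₀ ℕ) c') →
          (spineSet k d (r + c) (m - Finsupp.single c 1) (c + s')).ncard
            * ∏ c' ∈ (m - Finsupp.single c 1).support,
                Nat.factorial ((m - Finsupp.single c 1 : ℕ →₀ ℕ) c' - wfn k d c')
            = (∏ i ∈ Finset.range k, d i) * Nat.factorial (M - 1 - k)) ∧
        (¬ (∀ c', wfn k d c' ≤ (m - Finsupp.single c 1 : ℕ →₀ ℕ) c') →
          (spineSet k d (r + c) (m - Finsupp.single c 1) (c + s')).ncard = 0) := by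
      intro c hc
      have hcne := Finsupp.mem_support_iff.1 hc
      obtain ⟨hsum', hds'⟩ := hpieceH c hcne
      exact ih (M - 1) (by omega) k d (r + c) (m - Finsupp.single c 1) (c + s') hsum'
        hds' (by omega)
    obtain ⟨hfin, hcard⟩ := ncard_spine_a k d r m s' (fun c hc => (hpiece c hc).1)
    refine ⟨hfin, ?_, ?_⟩
    · intro hcond
      rw [hcard, Finset.sum_mul]
      have hterm : ∀ c ∈ m.support,
          (spineSet k d (r + c) (m - Finsupp.single c 1) (c + s')).ncard
            * ∏ c' ∈ m.support, Nat.factorial (m c' - wfn k d c')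
          = (m c - wfn k d c)
              * ((∏ i ∈ Finset.range k, d i) * Nat.factorial (M - 1 - k)) := by
        intro c hc
        have hcne := Finsupp.mem_support_iff.1 hc
        have hm' := sub_add_single hcne
        have hmc : m c = (m - Finsupp.single c 1 : ℕ →₀ ℕ) c + 1 := by
          rw [Finsupp.tsub_apply, Finsupp.single_apply, if_pos rfl]
          omega
        by_cases hcc : wfn k d c ≤ (m - Finsupp.single c 1 : ℕ →₀ ℕ) c
        · have hprod := prod_fact_sub_succ (m - Finsupp.single c 1) c (wfn k d) hcc
          rw [hm'] at hprod
          have hcond' : ∀ c', wfn k d c' ≤ (m - Finsupp.single c 1 : ℕ →₀ ℕ) c' := by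
            intro c'
            by_cases h : c' = c
            · subst h; exact hcc
            · have h1 := hcond c'
              rw [Finsupp.tsub_apply, Finsupp.single_apply,
                if_neg (fun hh => h hh.symm)]
              omega
          rw [hprod, ← mul_assoc,
            mul_comm _ ((m - Finsupp.single c 1 : ℕ →₀ ℕ) c + 1 - wfn k d c),
            mul_assoc, (hpiece c hc).2.1 hcond', ← hmc]
        · have h0 := (hpiece c hc).2.2 (fun hall => hcc (hall c))
          rw [h0, zero_mul]
          have : m c - wfn k d c = 0 := by
            have h1 := hcond c
            omega
          rw [this, zero_mul]
      rw [Finset.sum_congr rfl hterm, ← Finset.sum_mul]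
      have hsw := sum_wfn k d m hcond
      have hsmw : ∑ c ∈ m.support, (m c - wfn k d c) = M - k := by
        have h1 : ∑ c ∈ m.support, ((m c - wfn k d c) + wfn k d c)
            = ∑ c ∈ m.support, m c :=
          Finset.sum_congr rfl fun c _ => by have := hcond c; omega
        rw [Finset.sum_add_distrib, hsw] at h1
        have h2 : ∑ c ∈ m.support, m c = M := by rw [← sum_eq_support_sum]; exact hsum
        omega
      rw [hsmw]
      by_cases hP : (∏ i ∈ Finset.range k, d i) = 0
      · simp [hP]
      · have hkM : k < M := by
          have hdge : ∀ i < k, 1 ≤ d i := by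
            intro i hi
            by_contra h
            exact hP (Finset.prod_eq_zero (Finset.mem_range.2 hi) (by omega))
          have hpt : ∀ c ∈ m.support, wfn k d c ≤ c * wfn k d c := by
            intro c _
            rcases Nat.eq_zero_or_pos (wfn k d c) with h | h
            · omega
            · have hc1 : 1 ≤ c := by
                obtain ⟨i, hi⟩ := Finset.card_pos.1 h
                rw [Finset.mem_filter, Finset.mem_range] at hi
                have := hdge i hi.1
                omega
              calc wfn k d c = 1 * wfn k d c := (one_mul _).symm
                _ ≤ c * wfn k d c := Nat.mul_le_mul_right _ hc1
          have h3 : ∑ c ∈ m.support, wfn k d c ≤ ∑ c ∈ m.support, c * wfn k d c :=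
            Finset.sum_le_sum hpt
          have h4 : ∑ c ∈ m.support, c * wfn k d c ≤ ∑ c ∈ m.support, c * m c :=
            Finset.sum_le_sum fun c _ => Nat.mul_le_mul_left _ (hcond c)
          have h5 : dsNorm1 m = ∑ c ∈ m.support, c * m c := dsNorm1_eq_support_sum m
          omega
        have hfact : Nat.factorial (M - k) = (M - k) * Nat.factorial (M - 1 - k) := by
          conv_lhs => rw [show M - k = (M - 1 - k) + 1 by omega]
          rw [Nat.factorial_succ, show M - 1 - k + 1 = M - k by omega]
        rw [hfact]
        ring
    · intro hn
      rw [hcard]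
      refine Finset.sum_eq_zero fun c hc => ?_
      refine (hpiece c hc).2.2 fun h => hn fun c' => ?_
      have h1 := h c'
      rw [Finsupp.tsub_apply] at h1
      omega

lemma spine_eq_image (n : ℕ →₀ ℕ) (k : ℕ) (d : ℕ → ℕ) :
    spineSet k d 1 n 0 = (fun tv : PlaneTree × List ℕ => (([tv.1] : List PlaneTree), tv.2)) ''
      {tv : PlaneTree × List ℕ | tv ∈ markedTrees n ∧ k ≤ tv.2.length ∧
        ∀ i < k, tv.1.degAt (tv.2.take i) = d i} := by
  ext ⟨l, v⟩
  constructor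
  · rintro ⟨hlen, hstats, t, hget, hvert, hlv, hspine⟩
    obtain ⟨t0, rfl⟩ := List.length_eq_one_iff.1 hlen
    have ht : t = t0 := by simpa using hget.symm
    subst ht
    refine ⟨(t, v), ⟨⟨fun c => ?_, hvert⟩, hlv, hspine⟩, rfl⟩
    have := hstats c
    rwa [fdc_cons, fdc_nil, add_zero] at this
  · rintro ⟨⟨t, v'⟩, ⟨⟨hstats, hvert⟩, hlv, hspine⟩, heq⟩
    cases heq
    refine ⟨rfl, fun c => ?_, t, rfl, hvert, hlv, hspine⟩
    rw [fdc_cons, fdc_nil, add_zero]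
    exact hstats c

lemma card_marked_spine (n : ℕ →₀ ℕ) (k : ℕ) (d : ℕ → ℕ) :
    Nat.card {tv : PlaneTree × List ℕ // tv ∈ markedTrees n ∧ k ≤ tv.2.length ∧
        ∀ i < k, tv.1.degAt (tv.2.take i) = d i} = (spineSet k d 1 n 0).ncard := by
  have h1 : Nat.card {tv : PlaneTree × List ℕ // tv ∈ markedTrees n ∧ k ≤ tv.2.length ∧
      ∀ i < k, tv.1.degAt (tv.2.take i) = d i}
      = ({tv : PlaneTree × List ℕ | tv ∈ markedTrees n ∧ k ≤ tv.2.length ∧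
        ∀ i < k, tv.1.degAt (tv.2.take i) = d i} : Set (PlaneTree × List ℕ)).ncard :=
    Nat.card_coe_set_eq _
  rw [h1, spine_eq_image n k d, Set.ncard_image_of_injective]
  intro a b hab
  simp only [Prod.mk.injEq, List.cons.injEq] at hab
  obtain ⟨⟨h1', -⟩, h2'⟩ := hab
  exact Prod.ext h1' h2'

lemma card_marked_all (n : ℕ →₀ ℕ) (d : ℕ → ℕ) :
    Nat.card {tv : PlaneTree × List ℕ // tv ∈ markedTrees n}
      = (spineSet 0 d 1 n 0).ncard := by
  have h2 : {tv : PlaneTree × List ℕ | tv ∈ markedTrees n}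
      = {tv : PlaneTree × List ℕ | tv ∈ markedTrees n ∧ 0 ≤ tv.2.length ∧
        ∀ i < 0, tv.1.degAt (tv.2.take i) = d i} := by
    ext tv
    simp only [Set.mem_setOf_eq]
    exact ⟨fun h => ⟨h, Nat.zero_le _, fun i hi => absurd hi (by omega)⟩, fun h => h.1⟩
  have h1 : Nat.card {tv : PlaneTree × List ℕ // tv ∈ markedTrees n}
      = ({tv : PlaneTree × List ℕ | tv ∈ markedTrees n} : Set (PlaneTree × List ℕ)).ncard :=
    Nat.card_coe_set_eq _
  rw [h1, h2]
  exact (card_marked_spine n 0 d).symm.trans (Nat.card_coe_set_eq _) |>.symm.trans rfl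

end SpinalAux

/-- **Corollary (spinal degree sequence law).** With `n`, `N`, `k`, `d` as in
the spine-counting proposition, if `(T,V)` is uniform on `𝒯_n^•` then
`P((deg_T(V^0),…,deg_T(V^{k−1})) = d, |V| ≥ k)
  = (1/(N)_k) ∏_{i<k} d_i ∏_c (n(c))_{w(d,c)}`,
where `(m)_b` is the falling factorial. -/
theorem spinal_degree_sequence_law (n : ℕ →₀ ℕ) (N : ℕ)
    (hsum : n.sum (fun _ m => m) = N) (hsum1 : n.sum (fun c m => c * m) + 1 = N)
    (k : ℕ) (d : ℕ → ℕ)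
    (hw : ∀ c, ((Finset.range k).filter fun i => d i = c).card ≤ n c) :
    (Nat.card {tv : PlaneTree × List ℕ // tv ∈ markedTrees n ∧ k ≤ tv.2.length ∧
        ∀ i < k, tv.1.degAt (tv.2.take i) = d i} : ℝ) /
      (Nat.card {tv : PlaneTree × List ℕ // tv ∈ markedTrees n} : ℝ) =
    ((∏ i ∈ Finset.range k, (d i : ℝ)) *
        ∏ c ∈ n.support,
          ((n c).descFactorial (((Finset.range k).filter fun i => d i = c).card) : ℝ)) /
      (N.descFactorial k : ℝ) := by
  classical
  have hds : dsNorm1 n + 1 = N := hsum1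
  have hw' : ∀ c, SpinalAux.wfn k d c ≤ n c := hw
  obtain ⟨-, hA, -⟩ := SpinalAux.spine_count N k d 1 n 0 hsum hds (by omega)
  have hAeq := hA hw'
  obtain ⟨-, hB, -⟩ := SpinalAux.spine_count N 0 d 1 n 0 hsum hds (by omega)
  have hBeq := hB (fun c => by rw [SpinalAux.wfn_zero]; omega)
  simp only [SpinalAux.wfn_zero, Nat.sub_zero, Finset.range_zero, Finset.prod_empty, one_mul]
    at hBeq
  rw [SpinalAux.card_marked_spine n k d, SpinalAux.card_marked_all n d]
  set num := (SpinalAux.spineSet k d 1 n 0).ncard with hnum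
  set den := (SpinalAux.spineSet 0 d 1 n 0).ncard with hden
  set P : ℕ := ∏ i ∈ Finset.range k, d i with hPdef
  set D : ℕ := ∏ c ∈ n.support,
    (n c).descFactorial (((Finset.range k).filter fun i => d i = c).card) with hDdef
  set F1 : ℕ := ∏ c ∈ n.support, Nat.factorial (n c - SpinalAux.wfn k d c) with hF1def
  set F2 : ℕ := ∏ c ∈ n.support, Nat.factorial (n c) with hF2def
  have hkN : k ≤ N := by
    have h1 := SpinalAux.sum_wfn k d n hw'
    have h2 : ∑ c ∈ n.support, SpinalAux.wfn k d c ≤ ∑ c ∈ n.support, n c :=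
      Finset.sum_le_sum fun c _ => hw' c
    have h3 : ∑ c ∈ n.support, n c = N := by
      rw [← SpinalAux.sum_eq_support_sum]; exact hsum
    omega
  have hDF : D * F1 = F2 := by
    rw [hDdef, hF1def, hF2def, ← Finset.prod_mul_distrib]
    refine Finset.prod_congr rfl fun c _ => ?_
    rw [mul_comm]
    exact Nat.factorial_mul_descFactorial (hw' c)
  have hNk : Nat.factorial (N - k) * N.descFactorial k = Nat.factorial N :=
    Nat.factorial_mul_descFactorial hkN
  have hF2ne : F2 ≠ 0 := by
    rw [hF2def]
    exact Finset.prod_ne_zero_iff.2 fun _ _ => Nat.factorial_ne_zero _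
  have hF1ne : F1 ≠ 0 := by
    rw [hF1def]
    exact Finset.prod_ne_zero_iff.2 fun _ _ => Nat.factorial_ne_zero _
  have hden0 : den ≠ 0 := by
    intro h
    rw [h, zero_mul] at hBeq
    exact Nat.factorial_ne_zero N hBeq.symm
  have hNdk : N.descFactorial k ≠ 0 := by
    intro h
    rw [Nat.descFactorial_eq_zero_iff_lt] at h
    omega
  have key : num * N.descFactorial k = P * D * den := by
    have h1 : num * N.descFactorial k * F1 * F2 = P * D * den * F1 * F2 := by
      calc num * N.descFactorial k * F1 * F2
          = num * F1 * N.descFactorial k * F2 := by ring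
        _ = P * Nat.factorial (N - k) * N.descFactorial k * F2 := by rw [hAeq]
        _ = P * (Nat.factorial (N - k) * N.descFactorial k) * F2 := by ring
        _ = P * Nat.factorial N * F2 := by rw [hNk]
        _ = P * (den * F2) * F2 := by rw [hBeq]
        _ = P * (D * F1) * den * F2 := by rw [hDF]; ring
        _ = P * D * den * F1 * F2 := by ring
    have h2 := Nat.eq_of_mul_eq_mul_right (Nat.pos_of_ne_zero hF2ne) h1
    exact Nat.eq_of_mul_eq_mul_right (Nat.pos_of_ne_zero hF1ne) h2
  rw [div_eq_div_iff (by exact_mod_cast hden0) (by exact_mod_cast hNdk)]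
  push_cast
  exact_mod_cast congrArg (fun x : ℕ => (x : ℝ)) key
end

section
/- Let d = (d_1,...,d_n) be non-negative integers, write d_max = max_i d_i and assume n ≥ 2; set p_i = d_i/(2(n−1)) for each i, p_max = d_max/(2(n−1)), v = Σ_{i : d_i ≥ 2} d_i²/(n−1), and g(t,d) = ∏_{i : d_i ≥ 2}(1 + p_i·t)·e^{−p_i·t}. Then for all 0 ≤ t < 1/p_max = 2(n−1)/d_max: (i) log g(t,d) = Σ_{k≥2} ((−1)^{k+1}/k)·Σ_{i : d_i ≥ 2}(d_i·t/(2(n−1)))^k, and (ii) |log g(t,d) + v·t²/(8(n−1))| ≤ (d_max·t/(6(n−1) − 3·d_max·t)) · v·t²/(4(n−1)). -/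
open scoped ENNReal NNReal BigOperators
open MeasureTheory ProbabilityTheory

/-- `g(t,d) = ∏_{i : d_i ≥ 2} (1 + p_i t) e^{−p_i t}` where `p_i = d_i/(2(n−1))`. -/
noncomputable def gFun (n : ℕ) (d : Fin n → ℕ) (t : ℝ) : ℝ :=
  ∏ i ∈ Finset.univ.filter (fun i => 2 ≤ d i),
    (1 + (d i : ℝ) / (2 * ((n : ℝ) - 1)) * t) *
      Real.exp (-((d i : ℝ) / (2 * ((n : ℝ) - 1)) * t))

/-- `v = Σ_{i : d_i ≥ 2} d_i² / (n−1)`. -/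
noncomputable def vStat (n : ℕ) (d : Fin n → ℕ) : ℝ :=
  ∑ i ∈ Finset.univ.filter (fun i => 2 ≤ d i), (d i : ℝ) ^ 2 / ((n : ℝ) - 1)

lemma hasSum_log_aux {x : ℝ} (h0 : 0 ≤ x) (h1 : x < 1) :
    HasSum (fun m : ℕ => (-1 : ℝ) ^ (m + 1) / ((m : ℝ) + 2) * x ^ (m + 2))
      (Real.log (1 + x) - x) := by
  have habs : |(-x)| < 1 := by rwa [abs_neg, abs_of_nonneg h0]
  have H := Real.hasSum_pow_div_log_of_abs_lt_one habs
  rw [sub_neg_eq_add] at H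
  have H2 := H.neg
  have H3 := (hasSum_nat_add_iff' (f := fun k : ℕ => -((-x) ^ (k + 1) / ((k : ℝ) + 1))) 1).mpr H2
  simp only [Finset.range_one, Finset.sum_singleton] at H3
  have he : ∀ m : ℕ, -((-x) ^ (m + 1 + 1) / ((m + 1 : ℕ) + 1 : ℝ))
      = (-1 : ℝ) ^ (m + 1) / ((m : ℝ) + 2) * x ^ (m + 2) := by
    intro m
    rw [neg_pow]
    push_cast
    rw [pow_succ (-1 : ℝ) (m + 1)]
    ring
  rw [funext he] at H3
  convert H3 using 1
  · rfl
  simp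

lemma log_err_aux {x : ℝ} (h0 : 0 ≤ x) (h1 : x < 1) :
    |Real.log (1 + x) - x + x ^ 2 / 2| ≤ x ^ 3 / 3 * (1 - x)⁻¹ := by
  have key : HasSum (fun m : ℕ =>
      (-1 : ℝ) ^ (m + 1 + 1) / (((m + 1 : ℕ) : ℝ) + 2) * x ^ (m + 1 + 2))
      (Real.log (1 + x) - x + x ^ 2 / 2) := by
    have H := (hasSum_nat_add_iff'
      (f := fun m : ℕ => (-1 : ℝ) ^ (m + 1) / ((m : ℝ) + 2) * x ^ (m + 2)) 1).mpr
      (hasSum_log_aux h0 h1)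
    convert H using 1
    · rfl
    simp
    ring
  have hG : HasSum (fun m : ℕ => x ^ 3 / 3 * x ^ m) (x ^ 3 / 3 * (1 - x)⁻¹) :=
    (hasSum_geometric_of_lt_one h0 h1).mul_left _
  have habs : ∀ m : ℕ,
      |(-1 : ℝ) ^ (m + 1 + 1) / (((m + 1 : ℕ) : ℝ) + 2) * x ^ (m + 1 + 2)| ≤
        x ^ 3 / 3 * x ^ m := by
    intro m
    rw [abs_mul, abs_div, abs_pow, abs_neg, abs_one, one_pow,
      abs_of_nonneg (pow_nonneg h0 _), abs_of_nonneg (by positivity)]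
    have h3 : (0:ℝ) < 3 := by norm_num
    have hle3 : (3:ℝ) ≤ ((m + 1 : ℕ) : ℝ) + 2 := by push_cast; linarith [Nat.cast_nonneg (α := ℝ) m]
    calc 1 / (((m + 1 : ℕ) : ℝ) + 2) * x ^ (m + 1 + 2) ≤ 1 / 3 * x ^ (m + 1 + 2) := by
          gcongr
      _ = x ^ 3 / 3 * x ^ m := by rw [show m + 1 + 2 = m + 3 from rfl, pow_add]; ring
  have upper := hasSum_le (fun m => (le_abs_self _).trans (habs m)) key hG
  have lower := hasSum_le (fun m => le_trans (neg_le_neg (habs m)) (neg_abs_le _)) hG.neg key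
  exact abs_le.mpr ⟨by linarith, upper⟩

/-- **Lemma (expansion of `log g`).** For `0 ≤ t < 1/p_max = 2(n−1)/d_max`
(expressed multiplicatively as `t·d_max < 2(n−1)`, which also covers the case
`d_max = 0`, i.e. `1/p_max = ∞`):
`log g(t,d) = Σ_{k≥2} ((−1)^{k+1}/k) Σ_{i : d_i ≥ 2} (d_i t/(2(n−1)))^k` and
`|log g(t,d) + v t²/(8(n−1))| ≤ (d_max t/(6(n−1) − 3 d_max t)) · v t²/(4(n−1))`. -/
theorem log_g_expansion (n : ℕ) (hn : 2 ≤ n) (d : Fin n → ℕ) :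
    ∀ t : ℝ, 0 ≤ t → t * ((Finset.univ.sup d : ℕ) : ℝ) < 2 * ((n : ℝ) - 1) →
      Real.log (gFun n d t) =
        (∑' m : ℕ, ((-1 : ℝ) ^ (m + 1) / ((m : ℝ) + 2)) *
          ∑ i ∈ Finset.univ.filter (fun i => 2 ≤ d i),
            ((d i : ℝ) * t / (2 * ((n : ℝ) - 1))) ^ (m + 2)) ∧
      |Real.log (gFun n d t) + vStat n d * t ^ 2 / (8 * ((n : ℝ) - 1))| ≤
        ((Finset.univ.sup d : ℕ) : ℝ) * t /
            (6 * ((n : ℝ) - 1) - 3 * ((Finset.univ.sup d : ℕ) : ℝ) * t) *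
          (vStat n d * t ^ 2 / (4 * ((n : ℝ) - 1))) := by
  intro t ht htmax
  have hn1 : (0:ℝ) < (n:ℝ) - 1 := by
    have : (2:ℝ) ≤ (n:ℝ) := by exact_mod_cast hn
    linarith
  set s : Finset (Fin n) := Finset.univ.filter (fun i => 2 ≤ d i) with hs
  set D : ℝ := ((Finset.univ.sup d : ℕ) : ℝ) with hD
  have hD0 : 0 ≤ D := Nat.cast_nonneg _
  have hN : (0:ℝ) < 2 * ((n:ℝ) - 1) := by linarith
  set N : ℝ := 2 * ((n:ℝ) - 1) with hNdef
  -- pointwise facts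
  have hx0 : ∀ i : Fin n, 0 ≤ (d i : ℝ) * t / N := fun i => by positivity
  have hdiD : ∀ i : Fin n, (d i : ℝ) ≤ D := by
    intro i
    exact_mod_cast Nat.cast_le.mpr (Finset.le_sup (Finset.mem_univ i))
  have hXlt : D * t / N < 1 := by
    rw [div_lt_one hN]
    calc D * t = t * D := by ring
      _ < N := htmax
  have hxX : ∀ i : Fin n, (d i : ℝ) * t / N ≤ D * t / N := by
    intro i
    gcongr
    exact hdiD i
  have hx1 : ∀ i : Fin n, (d i : ℝ) * t / N < 1 := fun i => lt_of_le_of_lt (hxX i) hXlt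
  have hfac : ∀ i : Fin n, (d i : ℝ) / N * t = (d i : ℝ) * t / N := fun i => by ring
  -- log of product
  have hlog : Real.log (gFun n d t) =
      ∑ i ∈ s, (Real.log (1 + (d i : ℝ) * t / N) - (d i : ℝ) * t / N) := by
    rw [gFun, Real.log_prod]
    · apply Finset.sum_congr rfl
      intro i _
      rw [hfac i, Real.log_mul (by nlinarith [hx0 i]) (Real.exp_ne_zero _), Real.log_exp]
      ring
    · intro i _
      rw [hfac i]
      exact mul_ne_zero (by nlinarith [hx0 i]) (Real.exp_ne_zero _)
  -- part (i)
  have hsum : HasSum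
      (fun m : ℕ => ∑ i ∈ s, (-1 : ℝ) ^ (m + 1) / ((m : ℝ) + 2) * ((d i : ℝ) * t / N) ^ (m + 2))
      (∑ i ∈ s, (Real.log (1 + (d i : ℝ) * t / N) - (d i : ℝ) * t / N)) :=
    hasSum_sum (fun i _ => hasSum_log_aux (hx0 i) (hx1 i))
  have part1 : Real.log (gFun n d t) =
      ∑' m : ℕ, ((-1 : ℝ) ^ (m + 1) / ((m : ℝ) + 2)) *
        ∑ i ∈ s, ((d i : ℝ) * t / N) ^ (m + 2) := by
    rw [hlog, ← hsum.tsum_eq]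
    exact tsum_congr fun m => by rw [Finset.mul_sum]
  refine ⟨part1, ?_⟩
  -- part (ii)
  have stepA : vStat n d * t ^ 2 / (8 * ((n:ℝ) - 1)) =
      ∑ i ∈ s, ((d i : ℝ) * t / N) ^ 2 / 2 := by
    rw [vStat, Finset.sum_mul, Finset.sum_div]
    apply Finset.sum_congr rfl
    intro i _
    rw [hNdef]
    field_simp
    ring
  have stepB : vStat n d * t ^ 2 / (4 * ((n:ℝ) - 1)) =
      ∑ i ∈ s, ((d i : ℝ) * t / N) ^ 2 := by
    rw [vStat, Finset.sum_mul, Finset.sum_div]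
    apply Finset.sum_congr rfl
    intro i _
    rw [hNdef]
    field_simp
    ring
  set K : ℝ := D * t / (6 * ((n:ℝ) - 1) - 3 * D * t) with hK
  have hden : (0:ℝ) < 6 * ((n:ℝ) - 1) - 3 * D * t := by
    have : t * D < N := htmax
    rw [hNdef] at this
    nlinarith
  have pointwise : ∀ i ∈ s,
      |Real.log (1 + (d i : ℝ) * t / N) - (d i : ℝ) * t / N + ((d i : ℝ) * t / N) ^ 2 / 2| ≤
        K * ((d i : ℝ) * t / N) ^ 2 := by
    intro i _
    refine (log_err_aux (hx0 i) (hx1 i)).trans ?_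
    set x : ℝ := (d i : ℝ) * t / N with hxdef
    have h1x : 0 < 1 - x := by linarith [hx1 i]
    have hxN : x * N = (d i : ℝ) * t := by
      rw [hxdef]; field_simp
    have key : x / (3 * (1 - x)) ≤ K := by
      rw [hK, div_le_div_iff₀ (by linarith) hden]
      have hdt : (d i : ℝ) * t ≤ D * t := by nlinarith [hdiD i]
      have hxND : x * N ≤ D * t := by rw [hxN]; exact hdt
      rw [hNdef] at hxND
      nlinarith [hx0 i]
    calc x ^ 3 / 3 * (1 - x)⁻¹ = x ^ 2 * (x / (3 * (1 - x))) := by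
          field_simp
      _ ≤ x ^ 2 * K := by
          gcongr
      _ = K * x ^ 2 := by ring
  calc |Real.log (gFun n d t) + vStat n d * t ^ 2 / (8 * ((n:ℝ) - 1))|
      = |∑ i ∈ s, (Real.log (1 + (d i : ℝ) * t / N) - (d i : ℝ) * t / N +
          ((d i : ℝ) * t / N) ^ 2 / 2)| := by
        rw [hlog, stepA, ← Finset.sum_add_distrib]
    _ ≤ ∑ i ∈ s, |Real.log (1 + (d i : ℝ) * t / N) - (d i : ℝ) * t / N +
          ((d i : ℝ) * t / N) ^ 2 / 2| := Finset.abs_sum_le_sum_abs _ _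
    _ ≤ ∑ i ∈ s, K * ((d i : ℝ) * t / N) ^ 2 := Finset.sum_le_sum pointwise
    _ = K * ∑ i ∈ s, ((d i : ℝ) * t / N) ^ 2 := by rw [Finset.mul_sum]
    _ = K * (vStat n d * t ^ 2 / (4 * ((n:ℝ) - 1))) := by rw [stepB]
end

section
/- Let d = (d_1,...,d_n) be non-negative integers with n ≥ 2 and d_max = max_i d_i ≥ 1; set p_i = d_i/(2(n−1)), v = Σ_{i : d_i ≥ 2} d_i²/(n−1), and g(t,d) = ∏_{i : d_i ≥ 2}(1 + p_i·t)·e^{−p_i·t}. Then for all 0 ≤ t ≤ (n−1)/d_max, g(t,d) ≤ exp(−v·t²/(24(n−1))). -/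
open scoped ENNReal NNReal BigOperators
open MeasureTheory ProbabilityTheory

lemma key_ineq {x : ℝ} (hx : 0 ≤ x) (hx1 : x ≤ 1) :
    (1 + x) * Real.exp (-x) ≤ Real.exp (-(x ^ 2 / 6)) := by
  have h1 : (1 : ℝ) + x ≤ Real.exp (x - x ^ 2 / 6) := by
    have h2 : (x - x ^ 2 / 6) / 2 + 1 ≤ Real.exp ((x - x ^ 2 / 6) / 2) :=
      Real.add_one_le_exp _
    have h3 : Real.exp (x - x ^ 2 / 6) =
        Real.exp ((x - x ^ 2 / 6) / 2) * Real.exp ((x - x ^ 2 / 6) / 2) := by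
      rw [← Real.exp_add]; ring_nf
    have h4 : (0:ℝ) ≤ 1 + (x - x ^ 2 / 6) / 2 := by nlinarith
    nlinarith [sq_nonneg (1 + (x - x ^ 2 / 6) / 2)]
  calc (1 + x) * Real.exp (-x) ≤ Real.exp (x - x ^ 2 / 6) * Real.exp (-x) := by
        exact mul_le_mul_of_nonneg_right h1 (Real.exp_pos _).le
    _ = Real.exp (-(x ^ 2 / 6)) := by rw [← Real.exp_add]; ring_nf

/-- **Corollary (Gaussian-type bound on `g`).** For `0 ≤ t ≤ (n−1)/d_max`,
`g(t,d) ≤ exp(−v t²/(24(n−1)))`. -/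
theorem g_upper_bound (n : ℕ) (hn : 2 ≤ n) (d : Fin n → ℕ)
    (hd : 1 ≤ Finset.univ.sup d) :
    ∀ t : ℝ, 0 ≤ t → t ≤ ((n : ℝ) - 1) / ((Finset.univ.sup d : ℕ) : ℝ) →
      gFun n d t ≤ Real.exp (-(vStat n d * t ^ 2 / (24 * ((n : ℝ) - 1)))) := by
  intro t ht htu
  set D : ℝ := ((Finset.univ.sup d : ℕ) : ℝ) with hD
  have hD1 : (1:ℝ) ≤ D := by rw [hD]; exact_mod_cast hd
  have hN : (1:ℝ) ≤ (n:ℝ) - 1 := by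
    have : (2:ℝ) ≤ (n:ℝ) := by exact_mod_cast hn
    linarith
  have hNpos : (0:ℝ) < (n:ℝ) - 1 := by linarith
  have htD : t * D ≤ (n:ℝ) - 1 := by
    rw [le_div_iff₀ (by linarith : (0:ℝ) < D)] at htu
    linarith
  have hkey : ∀ i ∈ Finset.univ.filter (fun i => 2 ≤ d i),
      (1 + (d i : ℝ) / (2 * ((n : ℝ) - 1)) * t) *
        Real.exp (-((d i : ℝ) / (2 * ((n : ℝ) - 1)) * t)) ≤
      Real.exp (-(((d i : ℝ) / (2 * ((n : ℝ) - 1)) * t) ^ 2 / 6)) := by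
    intro i _
    have hdi : (d i : ℝ) ≤ D := by
      rw [hD]; exact_mod_cast Finset.le_sup (Finset.mem_univ i)
    have hdi0 : (0:ℝ) ≤ (d i : ℝ) := Nat.cast_nonneg _
    have hx0 : 0 ≤ (d i : ℝ) / (2 * ((n : ℝ) - 1)) * t := by positivity
    have hx1 : (d i : ℝ) / (2 * ((n : ℝ) - 1)) * t ≤ 1 := by
      rw [div_mul_eq_mul_div, div_le_one (by linarith : (0:ℝ) < 2 * ((n:ℝ) - 1))]
      nlinarith
    exact key_ineq hx0 hx1
  calc gFun n d t ≤ ∏ i ∈ Finset.univ.filter (fun i => 2 ≤ d i),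
        Real.exp (-(((d i : ℝ) / (2 * ((n : ℝ) - 1)) * t) ^ 2 / 6)) := by
        refine Finset.prod_le_prod (fun i _ => ?_) hkey
        have hx0 : 0 ≤ (d i : ℝ) / (2 * ((n : ℝ) - 1)) * t := by positivity
        positivity
    _ = Real.exp (∑ i ∈ Finset.univ.filter (fun i => 2 ≤ d i),
          (-(((d i : ℝ) / (2 * ((n : ℝ) - 1)) * t) ^ 2 / 6))) := by
        rw [Real.exp_sum]
    _ = Real.exp (-(vStat n d * t ^ 2 / (24 * ((n : ℝ) - 1)))) := by
        congr 1
        rw [vStat, Finset.sum_mul, Finset.sum_div, ← Finset.sum_neg_distrib]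
        refine Finset.sum_congr rfl fun i _ => ?_
        have : ((n:ℝ) - 1) ≠ 0 := ne_of_gt hNpos
        field_simp
        ring
end
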